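/- (Injectivity of the interval encoding on prefix-incomparable sequences.) If s and s' are finite sequences over V such that neither is a prefix of the other, then their intervals are disjoint: I_s ∩ I_{s'} = ∅. Consequently any real number z lies in the interval of at most one sequence of any given length. -/

import Mathlib

open Finset

/-- Cumulative probability `C_t(x) = ∑_{u : σ u < σ t} P(u | x)`. -/
noncomputable def cdf {V : Type*} [Fintype V] (P : List V → V → ℝ) (σ : V → ℕ)
    (x : List V) (t : V) : ℝ :=
  ∑ u ∈ Finset.univ.filter (fun u => σ u < σ t), P x u

/-- Endpoints of the interval `I_{x ++ s}`, given that `I_x = [ab.1, ab.2)`: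
starting from prefix `x` with interval endpoints `ab`, process the tokens of `s`
one by one, replacing the current interval `[a, b)` by the child interval
`[a + (b-a)·C_t(x), a + (b-a)·(C_t(x) + P(t|x)))`. -/
noncomputable def endsAux {V : Type*} [Fintype V] (P : List V → V → ℝ) (σ : V → ℕ) :
    List V → List V → ℝ × ℝ → ℝ × ℝ
  | _, [], ab => ab
  | x, t :: r, ab =>
      endsAux P σ (x ++ [t]) r
        (ab.1 + (ab.2 - ab.1) * cdf P σ x t,
         ab.1 + (ab.2 - ab.1) * (cdf P σ x t + P x t))

/-- Endpoints of the interval `I_s` (starting from `I_{[]} = [0,1)`). -/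
noncomputable def ends {V : Type*} [Fintype V] (P : List V → V → ℝ) (σ : V → ℕ)
    (s : List V) : ℝ × ℝ :=
  endsAux P σ [] s ((0 : ℝ), (1 : ℝ))

/-- The half-open interval `I_s ⊆ ℝ`. -/
noncomputable def interval {V : Type*} [Fintype V] (P : List V → V → ℝ) (σ : V → ℕ)
    (s : List V) : Set ℝ :=
  Set.Ico (ends P σ s).1 (ends P σ s).2

section Aux
variable {V : Type*} [Fintype V] (P : List V → V → ℝ) (σ : V → ℕ)

lemma cdf_nonneg (hP0 : ∀ x t, 0 ≤ P x t) (x : List V) (t : V) : 0 ≤ cdf P σ x t :=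
  Finset.sum_nonneg fun u _ => hP0 x u

lemma cdf_add_le (hP0 : ∀ x t, 0 ≤ P x t) (hPsum : ∀ x : List V, ∑ t, P x t ≤ 1)
    (x : List V) (t : V) : cdf P σ x t + P x t ≤ 1 := by
  classical
  have h : cdf P σ x t + P x t = ∑ u ∈ insert t (Finset.univ.filter (fun u => σ u < σ t)), P x u := by
    rw [Finset.sum_insert (by simp), cdf]; ring
  rw [h]
  calc _ ≤ ∑ u, P x u := Finset.sum_le_sum_of_subset_of_nonneg (by simp) (fun u _ _ => hP0 x u)
    _ ≤ 1 := hPsum x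

lemma cdf_chain (hP0 : ∀ x t, 0 ≤ P x t) (x : List V) {t t' : V} (h : σ t < σ t') :
    cdf P σ x t + P x t ≤ cdf P σ x t' := by
  classical
  have heq : cdf P σ x t + P x t = ∑ u ∈ insert t (Finset.univ.filter (fun u => σ u < σ t)), P x u := by
    rw [Finset.sum_insert (by simp), cdf]; ring
  rw [heq]
  apply Finset.sum_le_sum_of_subset_of_nonneg _ (fun u _ _ => hP0 x u)
  intro u hu
  simp only [Finset.mem_insert, Finset.mem_filter, Finset.mem_univ, true_and] at *
  rcases hu with rfl | hu
  · exact h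
  · exact hu.trans h

lemma endsAux_append (x s1 : List V) : ∀ s2 ab,
    endsAux P σ x (s1 ++ s2) ab = endsAux P σ (x ++ s1) s2 (endsAux P σ x s1 ab) := by
  induction s1 generalizing x with
  | nil => simp [endsAux]
  | cons t r ih => intro s2 ab; simp [endsAux, ih]

lemma endsAux_nested (hP0 : ∀ x t, 0 ≤ P x t) (hPsum : ∀ x : List V, ∑ t, P x t ≤ 1)
    (s : List V) : ∀ (x : List V) (a b : ℝ), a ≤ b →
    a ≤ (endsAux P σ x s (a, b)).1 ∧ (endsAux P σ x s (a, b)).1 ≤ (endsAux P σ x s (a, b)).2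
      ∧ (endsAux P σ x s (a, b)).2 ≤ b := by
  induction s with
  | nil => intro x a b hab; exact ⟨le_refl _, hab, le_refl _⟩
  | cons t r ih =>
    intro x a b hab
    have hba : (0:ℝ) ≤ b - a := by linarith
    have hC := cdf_nonneg P σ hP0 x t
    have hCP := cdf_add_le P σ hP0 hPsum x t
    have h1 : a ≤ a + (b - a) * cdf P σ x t := by nlinarith
    have h2 : a + (b - a) * cdf P σ x t ≤ a + (b - a) * (cdf P σ x t + P x t) := by
      nlinarith [hP0 x t]
    have h3 : a + (b - a) * (cdf P σ x t + P x t) ≤ b := by nlinarith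
    obtain ⟨ha, hm, hb⟩ := ih (x ++ [t]) _ _ h2
    exact ⟨le_trans h1 (by simpa [endsAux] using ha), by simpa [endsAux] using hm,
      le_trans (by simpa [endsAux] using hb) h3⟩

lemma split_of_not_prefix : ∀ s s' : List V, ¬ s <+: s' → ¬ s' <+: s →
    ∃ (x : List V) (t t' : V) (r r' : List V),
      t ≠ t' ∧ s = x ++ t :: r ∧ s' = x ++ t' :: r' := by
  intro s
  induction s with
  | nil => intro s' h _; exact absurd (List.nil_prefix) h
  | cons a s ih =>
    intro s' h h'
    cases s' with
    | nil => exact absurd (List.nil_prefix) h'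
    | cons b s' =>
      by_cases hab : a = b
      · subst hab
        have h1 : ¬ s <+: s' := fun hp => h (List.prefix_cons_inj a |>.mpr hp)
        have h2 : ¬ s' <+: s := fun hp => h' (List.prefix_cons_inj a |>.mpr hp)
        obtain ⟨x, t, t', r, r', hne, hs, hs'⟩ := ih s' h1 h2
        exact ⟨a :: x, t, t', r, r', hne, by simp [hs], by simp [hs']⟩
      · exact ⟨[], a, b, s, s', hab, rfl, rfl⟩

end Aux

section Main
variable {V : Type*} [Fintype V] (P : List V → V → ℝ) (σ : V → ℕ)

lemma key_disjoint (hP0 : ∀ x t, 0 ≤ P x t) (hPsum : ∀ x : List V, ∑ t, P x t ≤ 1)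
    (x : List V) {t t' : V} (r r' : List V) (hσtt : σ t < σ t') :
    interval P σ (x ++ t :: r) ∩ interval P σ (x ++ t' :: r') = ∅ := by
  set ab := endsAux P σ [] x ((0:ℝ), (1:ℝ)) with hab
  obtain ⟨ha0, habm, hb1⟩ := endsAux_nested P σ hP0 hPsum x [] 0 1 zero_le_one
  set a := ab.1
  set b := ab.2
  have hba : (0:ℝ) ≤ b - a := by linarith
  have hsplit : ∀ (u : V) (rr : List V),
      ends P σ (x ++ u :: rr) = endsAux P σ (x ++ [u]) rr
        (a + (b - a) * cdf P σ x u, a + (b - a) * (cdf P σ x u + P x u)) := by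
    intro u rr
    rw [ends, endsAux_append P σ [] x (u :: rr) ((0:ℝ),(1:ℝ))]
    simp [endsAux, ← hab]; rfl
  have hsub : ∀ (u : V) (rr : List V),
      interval P σ (x ++ u :: rr) ⊆
        Set.Ico (a + (b - a) * cdf P σ x u) (a + (b - a) * (cdf P σ x u + P x u)) := by
    intro u rr
    have hle : a + (b - a) * cdf P σ x u ≤ a + (b - a) * (cdf P σ x u + P x u) := by
      nlinarith [hP0 x u]
    obtain ⟨h1, h2, h3⟩ := endsAux_nested P σ hP0 hPsum rr (x ++ [u]) _ _ hle
    intro z hz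
    rw [interval, hsplit u rr] at hz
    exact ⟨le_trans h1 hz.1, lt_of_lt_of_le hz.2 h3⟩
  have hchain := cdf_chain P σ hP0 x hσtt
  ext z
  simp only [Set.mem_inter_iff, Set.mem_empty_iff_false, iff_false, not_and]
  intro hz hz'
  have h1 := hsub t r hz
  have h2 := hsub t' r' hz'
  have : a + (b - a) * (cdf P σ x t + P x t) ≤ a + (b - a) * cdf P σ x t' := by
    nlinarith
  have := h1.2
  have := h2.1
  linarith

end Main

/-- **Injectivity of the interval encoding on prefix-incomparable
sequences.** If neither of `s`, `s'` is a prefix of the other, then `I_s ∩ I_{s'} = ∅`;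
consequently any real `z` lies in the interval of at most one sequence of any given
length. -/
theorem intervals_disjoint_of_not_prefix {V : Type*} [Fintype V] [Nonempty V]
    (P : List V → V → ℝ)
    (hP0 : ∀ (x : List V) (t : V), 0 ≤ P x t)
    (hPsum : ∀ x : List V, ∑ t, P x t ≤ 1)
    (σ : V → ℕ) (hσ : Function.Injective σ) :
    (∀ s s' : List V, ¬ s <+: s' → ¬ s' <+: s →
      interval P σ s ∩ interval P σ s' = ∅) ∧
    (∀ (z : ℝ) (n : ℕ) (s s' : List V), s.length = n → s'.length = n →
      z ∈ interval P σ s → z ∈ interval P σ s' → s = s') := by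
  have main : ∀ s s' : List V, ¬ s <+: s' → ¬ s' <+: s →
      interval P σ s ∩ interval P σ s' = ∅ := by
    intro s s' h h'
    obtain ⟨x, t, t', r, r', hne, rfl, rfl⟩ := split_of_not_prefix s s' h h'
    have hσne : σ t ≠ σ t' := fun hh => hne (hσ hh)
    rcases hσne.lt_or_gt with hlt | hlt
    · exact key_disjoint P σ hP0 hPsum x r r' hlt
    · rw [Set.inter_comm]
      exact key_disjoint P σ hP0 hPsum x r' r hlt
  refine ⟨main, ?_⟩
  intro z n s s' hl hl' hz hz'
  by_contra hne
  have h1 : ¬ s <+: s' := fun hp => hne (List.IsPrefix.eq_of_length hp (hl.trans hl'.symm))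
  have h2 : ¬ s' <+: s := fun hp => (hne (List.IsPrefix.eq_of_length hp (hl'.trans hl.symm)).symm)
  have := main s s' h1 h2
  have : z ∈ interval P σ s ∩ interval P σ s' := ⟨hz, hz'⟩
  rw [main s s' h1 h2] at this
  exact this
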